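/- For all sufficiently large natural numbers q, the sum over primes p dividing q of 1/√p is O(√(log q)/log log q). More precisely, there is a constant c > 0 such that for all q ≥ 16, ∑_{p | q, p prime} p^{-1/2} ≤ c·√(log q)/log log q. -/

import Mathlib

open Finset

lemma sum_log_primesBelow (n : ℕ) :
    ∑ p ∈ (n+1).primesBelow, Real.log p ≤ n * (2 * Real.log 2) := by
  have h1 : (n+1).primesBelow = Finset.filter Nat.Prime (Finset.range (n+1)) := rfl
  have h2 : ∑ p ∈ (n+1).primesBelow, Real.log p = Real.log (primorial n) := by
    rw [primorial, Nat.cast_prod, Real.log_prod]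
    · rw [h1]
    · intro p hp
      have hp' : p.Prime := (Nat.mem_primesBelow.mp (h1 ▸ hp)).2
      simp [hp'.pos.ne']
  rw [h2]
  have h3 : (primorial n : ℝ) ≤ (4:ℝ)^n := by exact_mod_cast primorial_le_4_pow n
  calc Real.log (primorial n) ≤ Real.log ((4:ℝ)^n) :=
        Real.log_le_log (by exact_mod_cast (primorial_pos n)) h3
    _ = n * (2 * Real.log 2) := by
        rw [Real.log_pow, show (4:ℝ) = 2^2 by norm_num, Real.log_pow]
        push_cast; ring

noncomputable def rf (p : ℕ) : ℝ := 1 / Real.sqrt p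

lemma sqrt_two_pow (k : ℕ) : Real.sqrt ((2:ℝ)^k) = (Real.sqrt 2)^k := by
  have hsq : (Real.sqrt 2)^k * (Real.sqrt 2)^k = (2:ℝ)^k := by
    rw [← mul_pow, Real.mul_self_sqrt (by norm_num)]
  rw [← hsq, Real.sqrt_mul_self (pow_nonneg (Real.sqrt_nonneg 2) k)]

lemma rf_nonneg (p : ℕ) : 0 ≤ rf p := by unfold rf; positivity

lemma block_sum (k : ℕ) (hk : 1 ≤ k) :
    ∑ p ∈ ((2^(k+1)+1).primesBelow.filter (fun p => 2^k < p)), rf p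
      ≤ 4 * (Real.sqrt 2)^k / k := by
  set B := ((2^(k+1)+1).primesBelow.filter (fun p => 2^k < p)) with hB
  have hkpos : (0:ℝ) < k := by exact_mod_cast hk
  have hlog2 : (0:ℝ) < Real.log 2 := Real.log_pos (by norm_num)
  have hple : ∀ p ∈ B, (k:ℝ) * Real.log 2 ≤ Real.log p := by
    intro p hp
    have h2k : (2:ℕ)^k < p := (Finset.mem_filter.mp hp).2
    have h2k' : ((2:ℝ)^k) ≤ (p:ℝ) := by exact_mod_cast h2k.le
    calc (k:ℝ) * Real.log 2 = Real.log ((2:ℝ)^k) := by rw [Real.log_pow]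
      _ ≤ Real.log p := Real.log_le_log (by positivity) h2k'
  have hcard1 : (B.card : ℝ) * ((k:ℝ) * Real.log 2) ≤ ∑ p ∈ B, Real.log p := by
    have := Finset.card_nsmul_le_sum B (fun p => Real.log p) ((k:ℝ) * Real.log 2) hple
    simpa [nsmul_eq_mul] using this
  have hsub : ∑ p ∈ B, Real.log p ≤ ∑ p ∈ (2^(k+1)+1).primesBelow, Real.log (p:ℕ) := by
    apply Finset.sum_le_sum_of_subset_of_nonneg (Finset.filter_subset _ _)
    intro p hp _
    have hp' := Nat.prime_of_mem_primesBelow hp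
    have : (1:ℝ) ≤ p := by exact_mod_cast hp'.one_lt.le
    exact Real.log_nonneg this
  have hcard2 : (B.card : ℝ) ≤ 2^(k+2) / k := by
    have h4 := (hcard1.trans hsub).trans (sum_log_primesBelow (2^(k+1)))
    rw [le_div_iff₀ hkpos]
    push_cast at h4
    have h5 : ((B.card:ℝ) * k) * Real.log 2 ≤ ((2:ℝ)^(k+2)) * Real.log 2 := by
      have e : ((2:ℝ)^(k+1)) * (2*Real.log 2) = ((2:ℝ)^(k+2)) * Real.log 2 := by ring
      nlinarith [h4, e]
    exact le_of_mul_le_mul_right h5 hlog2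
  have hterm : ∀ p ∈ B, rf p ≤ 1 / (Real.sqrt 2)^k := by
    intro p hp
    have h2k : (2:ℕ)^k < p := (Finset.mem_filter.mp hp).2
    have h2k' : ((2:ℝ)^k) ≤ (p:ℝ) := by exact_mod_cast h2k.le
    have hs : (Real.sqrt 2)^k ≤ Real.sqrt p := by
      rw [← sqrt_two_pow]; exact Real.sqrt_le_sqrt h2k'
    exact one_div_le_one_div_of_le (by positivity) hs
  have hsum : ∑ p ∈ B, rf p ≤ (B.card : ℝ) * (1 / (Real.sqrt 2)^k) := by
    have := Finset.sum_le_card_nsmul B _ _ hterm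
    simpa [nsmul_eq_mul] using this
  have hspos : (0:ℝ) < (Real.sqrt 2)^k := by positivity
  calc ∑ p ∈ B, rf p ≤ (B.card : ℝ) * (1 / (Real.sqrt 2)^k) := hsum
    _ ≤ (2^(k+2) / k) * (1 / (Real.sqrt 2)^k) :=
        mul_le_mul_of_nonneg_right hcard2 (by positivity)
    _ = 4 * (Real.sqrt 2)^k / k := by
        have hsq : (Real.sqrt 2)^k * (Real.sqrt 2)^k = (2:ℝ)^k := by
          rw [← mul_pow, Real.mul_self_sqrt (by norm_num)]
        have h2 : (2:ℝ)^(k+2) = 4 * ((Real.sqrt 2)^k * (Real.sqrt 2)^k) := by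
          rw [hsq]; ring
        rw [h2]; field_simp

lemma geom_aux : ∀ M : ℕ, 5 ≤ M →
    ∑ i ∈ Finset.range M, (Real.sqrt 2)^(i+1) / (i+1) ≤ 10 * (Real.sqrt 2)^M / M := by
  intro M hM
  have hs2 : Real.sqrt 2 ^ 2 = 2 := Real.sq_sqrt (by norm_num)
  have hs0 : (0:ℝ) ≤ Real.sqrt 2 := Real.sqrt_nonneg 2
  have hs141 : (1.41:ℝ) ≤ Real.sqrt 2 := by nlinarith
  induction M, hM using Nat.le_induction with
  | base =>
    simp only [Finset.sum_range_succ, Finset.range_zero, Finset.sum_empty]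
    norm_num
    nlinarith [pow_nonneg hs0 5]
  | succ M hM ih =>
    rw [Finset.sum_range_succ]
    have hMR : (5:ℝ) ≤ (M:ℝ) := by exact_mod_cast hM
    have hpow : (0:ℝ) < (Real.sqrt 2)^M := by positivity
    have key : 10 * (Real.sqrt 2)^M / M + (Real.sqrt 2)^(M+1) / (M+1)
        ≤ 10 * (Real.sqrt 2)^(M+1) / (M+1) := by
      rw [div_add_div _ _ (by linarith : (M:ℝ) ≠ 0) (by linarith : ((M:ℝ)+1) ≠ 0),
        div_le_div_iff₀ (by positivity) (by linarith : (0:ℝ) < (M:ℝ)+1)]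
      have e : (Real.sqrt 2)^(M+1) = Real.sqrt 2 * (Real.sqrt 2)^M := by ring
      rw [e]
      have h9 : 10*((M:ℝ)+1) + M*Real.sqrt 2 ≤ 10*(Real.sqrt 2)*M := by
        nlinarith [mul_nonneg (sub_nonneg.2 hs141) (by linarith : (0:ℝ) ≤ (M:ℝ))]
      have h10 := mul_le_mul_of_nonneg_right h9
        (mul_nonneg hpow.le (by linarith : (0:ℝ) ≤ (M:ℝ)+1))
      nlinarith [h10]
    push_cast
    push_cast at ih
    linarith [ih, key]

noncomputable def g (k : ℕ) : ℝ := if k = 0 then 1 else 4 * (Real.sqrt 2)^k / k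

lemma chern (N : ℕ) (hN : 33 ≤ N) :
    ∑ p ∈ N.primesBelow, rf p ≤ 40 * Real.sqrt N / Real.log N := by
  classical
  obtain ⟨K, hK⟩ : ∃ K, Nat.clog 2 N = K := ⟨_, rfl⟩
  have hK6 : 6 ≤ K := by
    have : 5 < Nat.clog 2 N := (Nat.lt_clog_iff_pow_lt (by norm_num)).mpr (by omega)
    omega
  have hNle : N ≤ 2^K := hK ▸ Nat.le_pow_clog (by norm_num) N
  have hN2 : 2^(K-1) < N := by
    have := Nat.pow_pred_clog_lt_self (b := 2) (by norm_num) (x := N) (by omega)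
    simpa [hK] using this
  have hmaps : ∀ p ∈ N.primesBelow, Nat.log 2 (p-1) ∈ Finset.range K := by
    intro p hp
    have hp2 := (Nat.prime_of_mem_primesBelow hp).two_le
    have hpN := Nat.lt_of_mem_primesBelow hp
    rw [Finset.mem_range]
    exact Nat.log_lt_of_lt_pow (by omega) (by omega)
  have hdecomp : ∑ p ∈ N.primesBelow, rf p
      = ∑ k ∈ Finset.range K, ∑ p ∈ N.primesBelow.filter (fun p => Nat.log 2 (p-1) = k), rf p :=
    (Finset.sum_fiberwise_of_maps_to hmaps rf).symm
  have hfiber : ∀ k ∈ Finset.range K,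
      ∑ p ∈ N.primesBelow.filter (fun p => Nat.log 2 (p-1) = k), rf p ≤ g k := by
    intro k _
    rcases Nat.eq_zero_or_pos k with rfl | hk1
    · have hsubs : N.primesBelow.filter (fun p => Nat.log 2 (p-1) = 0) ⊆ {2} := by
        intro p hp
        rw [Finset.mem_filter] at hp
        have hp2 := (Nat.prime_of_mem_primesBelow hp.1).two_le
        have := Nat.lt_pow_succ_log_self (b := 2) (by norm_num) (p-1)
        rw [hp.2] at this
        simp only [Finset.mem_singleton]
        omega
      have h2le : (1:ℝ) ≤ Real.sqrt ((2:ℕ):ℝ) := by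
        rw [show (((2:ℕ)):ℝ) = 2 by norm_num]
        nlinarith [Real.sq_sqrt (by norm_num : (0:ℝ) ≤ 2), Real.sqrt_nonneg 2]
      calc ∑ p ∈ _, rf p ≤ ∑ p ∈ ({2} : Finset ℕ), rf p :=
            Finset.sum_le_sum_of_subset_of_nonneg hsubs (fun p _ _ => rf_nonneg p)
        _ = rf 2 := Finset.sum_singleton _ _
        _ ≤ 1 := by
            unfold rf
            rw [div_le_one (by linarith)]
            exact h2le
        _ = g 0 := by unfold g; norm_num
    · have hsubs : N.primesBelow.filter (fun p => Nat.log 2 (p-1) = k)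
          ⊆ (2^(k+1)+1).primesBelow.filter (fun p => 2^k < p) := by
        intro p hp
        rw [Finset.mem_filter] at hp ⊢
        have hprime := Nat.prime_of_mem_primesBelow hp.1
        have hp2 := hprime.two_le
        have hlow : 2^k ≤ p - 1 := by
          rw [← hp.2]; exact Nat.pow_log_le_self 2 (by omega)
        have hhigh : p - 1 < 2^(k+1) := by
          have := Nat.lt_pow_succ_log_self (b := 2) (by norm_num) (p-1)
          rwa [hp.2] at this
        exact ⟨Nat.mem_primesBelow.mpr ⟨by omega, hprime⟩, by omega⟩
      calc ∑ p ∈ _, rf p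
          ≤ ∑ p ∈ (2^(k+1)+1).primesBelow.filter (fun p => 2^k < p), rf p :=
            Finset.sum_le_sum_of_subset_of_nonneg hsubs (fun p _ _ => rf_nonneg p)
        _ ≤ 4 * (Real.sqrt 2)^k / k := block_sum k hk1
        _ = g k := by unfold g; rw [if_neg (by omega)]
  have htot : ∑ p ∈ N.primesBelow, rf p ≤ ∑ k ∈ Finset.range K, g k := by
    rw [hdecomp]; exact Finset.sum_le_sum hfiber
  obtain ⟨K', rfl⟩ : ∃ K', K = K' + 1 := ⟨K - 1, by omega⟩
  have hK'5 : 5 ≤ K' := by omega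
  have hgsum : ∑ k ∈ Finset.range (K'+1), g k
      = 1 + 4 * ∑ i ∈ Finset.range K', (Real.sqrt 2)^(i+1) / (i+1) := by
    rw [Finset.sum_range_succ']
    have h : ∑ i ∈ Finset.range K', g (i+1)
        = ∑ i ∈ Finset.range K', 4*((Real.sqrt 2)^(i+1)/((i:ℝ)+1)) :=
      Finset.sum_congr rfl (fun i _ => by
        unfold g; rw [if_neg (by omega)]; push_cast; ring)
    rw [h, show g 0 = 1 from by unfold g; norm_num, ← Finset.mul_sum]
    ring
  have hgeom := geom_aux K' hK'5
  have hNpos : (0:ℝ) < N := by positivity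
  have hN1 : (1:ℝ) < N := by exact_mod_cast (by omega : 1 < N)
  have hlogN : 0 < Real.log N := Real.log_pos hN1
  have hsqrtN : 0 < Real.sqrt N := Real.sqrt_pos.mpr hNpos
  have hK'pos : (0:ℝ) < K' := by exact_mod_cast (by omega : 0 < K')
  have hlog2 : 0 < Real.log 2 := Real.log_pos (by norm_num)
  have hlog2lt : Real.log 2 < 0.6931471808 := Real.log_two_lt_d9
  have hpowK' : (Real.sqrt 2)^K' ≤ Real.sqrt N := by
    rw [← sqrt_two_pow]
    apply Real.sqrt_le_sqrt
    have : (2:ℕ)^K' ≤ N := by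
      have : 2^(K'+1-1) < N := hN2
      simpa using this.le
    exact_mod_cast this
  have hK5R : (5:ℝ) ≤ (K':ℝ) := by exact_mod_cast hK'5
  have hlogNle : Real.log N ≤ (6/5) * K' * Real.log 2 := by
    have h1 : Real.log N ≤ (K'+1) * Real.log 2 := by
      calc Real.log N ≤ Real.log ((2:ℝ)^(K'+1)) := by
            apply Real.log_le_log hNpos
            exact_mod_cast hNle
        _ = (K'+1) * Real.log 2 := by rw [Real.log_pow]; push_cast; ring
    nlinarith [mul_nonneg hlog2.le (by linarith : (0:ℝ) ≤ (K':ℝ)-5)]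
  have hfin1 : 40*(Real.sqrt 2)^K'/(K':ℝ) ≤ 34*Real.sqrt N/Real.log N := by
    rw [div_le_div_iff₀ hK'pos hlogN]
    have ha : 40*(Real.sqrt 2)^K' * Real.log N ≤ 40*Real.sqrt N * ((6/5) * K' * Real.log 2) := by
      apply mul_le_mul
      · exact mul_le_mul_of_nonneg_left hpowK' (by norm_num)
      · exact hlogNle
      · exact hlogN.le
      · positivity
    have hb : 40*Real.sqrt N * ((6/5) * K' * Real.log 2) = 48 * Real.log 2 * (Real.sqrt N * K') := by
      ring
    nlinarith [ha, hb, mul_pos hsqrtN hK'pos,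
      mul_lt_mul_of_pos_right hlog2lt (mul_pos hsqrtN hK'pos)]
  have hfin2 : (1:ℝ) ≤ 6*Real.sqrt N/Real.log N := by
    rw [le_div_iff₀ hlogN]
    have h1 : Real.log (Real.sqrt N) = Real.log N / 2 := Real.log_sqrt hNpos.le
    have h2 : Real.log (Real.sqrt N) ≤ Real.sqrt N - 1 := Real.log_le_sub_one_of_pos hsqrtN
    linarith
  have hendgame : 40 * Real.sqrt N / Real.log N = 34*Real.sqrt N/Real.log N + 6*Real.sqrt N/Real.log N := by
    ring
  rw [hendgame]
  have h4g : 4 * ∑ i ∈ Finset.range K', (Real.sqrt 2)^(i+1) / (i+1) ≤ 40*(Real.sqrt 2)^K'/(K':ℝ) := by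
    have h := mul_le_mul_of_nonneg_left hgeom (by norm_num : (0:ℝ) ≤ 4)
    have e : 4*(10 * (Real.sqrt 2)^K' / (K':ℝ)) = 40*(Real.sqrt 2)^K'/(K':ℝ) := by ring
    linarith [h, e]
  calc ∑ p ∈ N.primesBelow, rf p ≤ ∑ k ∈ Finset.range (K'+1), g k := htot
    _ = 1 + 4 * ∑ i ∈ Finset.range K', (Real.sqrt 2)^(i+1) / (i+1) := hgsum
    _ ≤ 1 + 40*(Real.sqrt 2)^K'/(K':ℝ) := by linarith
    _ ≤ 34*Real.sqrt N/Real.log N + 6*Real.sqrt N/Real.log N := by linarith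

set_option maxHeartbeats 1000000 in
theorem stmt2 : ∃ c : ℝ, 0 < c ∧ ∀ q : ℕ, 16 ≤ q →
    ∑ p ∈ q.primeFactors, (p : ℝ) ^ (-(1 / 2 : ℝ)) ≤
      c * Real.sqrt (Real.log q) / Real.log (Real.log q) := by
  classical
  refine ⟨100, by norm_num, ?_⟩
  intro q hq
  have hq0 : 0 < q := by omega
  have hqR : (16:ℝ) ≤ (q:ℝ) := by exact_mod_cast hq
  have hrw : ∑ p ∈ q.primeFactors, (p : ℝ) ^ (-(1 / 2 : ℝ)) = ∑ p ∈ q.primeFactors, rf p := by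
    refine Finset.sum_congr rfl (fun p hp => ?_)
    have hp0 : (0:ℝ) ≤ p := Nat.cast_nonneg p
    rw [rf, Real.rpow_neg hp0, Real.sqrt_eq_rpow]; exact (one_div _).symm
  rw [hrw]
  set L := Real.log q with hL
  have hlog2 : 0 < Real.log 2 := Real.log_pos (by norm_num)
  have hlog2lt : Real.log 2 < 0.6931471808 := Real.log_two_lt_d9
  have hlog2gt : 0.6931471803 < Real.log 2 := Real.log_two_gt_d9
  have hL16 : Real.log 16 ≤ L := Real.log_le_log (by norm_num) hqR
  have hlog16 : Real.log 16 = 4 * Real.log 2 := by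
    rw [show (16:ℝ) = 2^4 by norm_num, Real.log_pow]; push_cast; ring
  have hL277 : (2.772:ℝ) ≤ L := by rw [hlog16] at hL16; nlinarith
  have hLpos : 0 < L := by linarith
  have hsqLpos : 0 < Real.sqrt L := Real.sqrt_pos.mpr hLpos
  have hsqL : Real.sqrt L * Real.sqrt L = L := Real.mul_self_sqrt hLpos.le
  have hlogLpos : 0 < Real.log L := Real.log_pos (by linarith)
  by_cases hbig : q < 2^50
  · -- small case
    have hcard : q.primeFactors.card ≤ 49 := by
      by_contra hc
      push_neg at hc
      have h1 : 2^q.primeFactors.card ≤ ∏ p ∈ q.primeFactors, p :=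
        Finset.pow_card_le_prod _ _ _ (fun p hp => (Nat.prime_of_mem_primeFactors hp).two_le)
      have h2 : ∏ p ∈ q.primeFactors, p ≤ q :=
        Nat.le_of_dvd hq0 (Nat.prod_primeFactors_dvd q)
      have : 2^50 ≤ 2^q.primeFactors.card := Nat.pow_le_pow_right (by norm_num) (by omega)
      omega
    have hsum : ∑ p ∈ q.primeFactors, rf p ≤ (q.primeFactors.card : ℝ) * (1/Real.sqrt 2) := by
      have h := Finset.sum_le_card_nsmul q.primeFactors rf (1/Real.sqrt 2) ?_
      · simpa [nsmul_eq_mul] using h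
      · intro p hp
        have hp2 : (2:ℝ) ≤ p := by exact_mod_cast (Nat.prime_of_mem_primeFactors hp).two_le
        unfold rf
        apply one_div_le_one_div_of_le (by norm_num [Real.sqrt_pos])
        exact Real.sqrt_le_sqrt hp2
    have hs2 : (1.41:ℝ) ≤ Real.sqrt 2 := by
      nlinarith [Real.sq_sqrt (by norm_num : (0:ℝ) ≤ 2), Real.sqrt_nonneg 2]
    have h35 : ∑ p ∈ q.primeFactors, rf p ≤ 35 := by
      have hcR : (q.primeFactors.card : ℝ) ≤ 49 := by exact_mod_cast hcard
      have : (q.primeFactors.card : ℝ) * (1/Real.sqrt 2) ≤ 49 * (1/Real.sqrt 2) := by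
        apply mul_le_mul_of_nonneg_right hcR (by positivity)
      have h49 : (49:ℝ) * (1/Real.sqrt 2) ≤ 35 := by
        rw [mul_one_div, div_le_iff₀ (by linarith)]
        nlinarith
      linarith
    -- L ≤ 50 log 2 < 64, log L ≤ 6 log 2 ≤ 4.159, sqrt L ≥ 1.66
    have hLub : L ≤ 64 := by
      have h1 : (q:ℝ) ≤ (2:ℝ)^50 := by
        have : q ≤ 2^50 := by omega
        exact_mod_cast this
      have h2 : L ≤ Real.log ((2:ℝ)^50) := Real.log_le_log (by positivity) h1
      rw [Real.log_pow] at h2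
      push_cast at h2
      nlinarith
    have hlogLub : Real.log L ≤ 6 * Real.log 2 := by
      calc Real.log L ≤ Real.log 64 := Real.log_le_log hLpos hLub
        _ = 6 * Real.log 2 := by
            rw [show (64:ℝ) = 2^6 by norm_num, Real.log_pow]; push_cast; ring
    have hsqrtLlb : (1.66:ℝ) ≤ Real.sqrt L := by
      nlinarith [hsqL, hsqLpos, hL277]
    have hfinal : (35:ℝ) ≤ 100 * Real.sqrt L / Real.log L := by
      rw [le_div_iff₀ hlogLpos]
      nlinarith [hlogLub, hsqrtLlb, hlog2lt]
    linarith
  · -- big case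
    push_neg at hbig
    have hL50 : 50 * Real.log 2 ≤ L := by
      have h1 : ((2:ℝ))^50 ≤ (q:ℝ) := by exact_mod_cast hbig
      have h2 := Real.log_le_log (by positivity) h1
      rw [Real.log_pow] at h2
      push_cast at h2
      linarith
    have hL34 : (34:ℝ) ≤ L := by nlinarith
    set y := Nat.floor L with hy
    have hy34 : 34 ≤ y := Nat.le_floor (by exact_mod_cast hL34)
    have hyL : (y:ℝ) ≤ L := Nat.floor_le hLpos.le
    have hLy : L - 1 ≤ (y:ℝ) := by
      have := Nat.lt_floor_add_one L
      linarith
    have hsqrtLy : Real.sqrt L ≤ (y:ℝ) := by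
      have h5 : (5:ℝ) ≤ Real.sqrt L := by nlinarith [hsqL, hsqLpos, hL34]
      nlinarith [hsqL, h5, hLy]
    have hlogy : Real.log L / 2 ≤ Real.log y := by
      calc Real.log L / 2 = Real.log (Real.sqrt L) := (Real.log_sqrt hLpos.le).symm
        _ ≤ Real.log y := Real.log_le_log hsqLpos hsqrtLy
    have hypos : (0:ℝ) < y := by exact_mod_cast (by omega : 0 < y)
    -- split the sum
    rw [← Finset.sum_filter_add_sum_filter_not q.primeFactors (fun p => p < y)]
    have hT1 : ∑ p ∈ q.primeFactors.filter (fun p => p < y), rf p ≤ 80 * Real.sqrt L / Real.log L := by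
      have hsubs : q.primeFactors.filter (fun p => p < y) ⊆ y.primesBelow := by
        intro p hp
        rw [Finset.mem_filter] at hp
        exact Nat.mem_primesBelow.mpr ⟨hp.2, Nat.prime_of_mem_primeFactors hp.1⟩
      have h1 : ∑ p ∈ q.primeFactors.filter (fun p => p < y), rf p ≤ ∑ p ∈ y.primesBelow, rf p :=
        Finset.sum_le_sum_of_subset_of_nonneg hsubs (fun p _ _ => rf_nonneg p)
      have h2 := chern y (by omega)
      have h3 : 40 * Real.sqrt y / Real.log y ≤ 40 * Real.sqrt L / (Real.log L / 2) := by
        apply div_le_div₀ (by positivity) _ (by linarith) hlogy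
        have := Real.sqrt_le_sqrt hyL
        linarith
      have h4 : 40 * Real.sqrt L / (Real.log L / 2) = 80 * Real.sqrt L / Real.log L := by
        field_simp
        ring
      linarith
    have hT2 : ∑ p ∈ q.primeFactors.filter (fun p => ¬ p < y), rf p ≤ 3 * Real.sqrt L / Real.log L := by
      have hterm : ∀ p ∈ q.primeFactors.filter (fun p => ¬ p < y),
          rf p ≤ (2 * Real.sqrt 2 / (Real.sqrt L * Real.log L)) * Real.log p := by
        intro p hp
        rw [Finset.mem_filter] at hp
        have hpy : y ≤ p := by omega
        have hpyR : (y:ℝ) ≤ (p:ℝ) := by exact_mod_cast hpy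
        have hppos : (0:ℝ) < p := by linarith
        have hsp : Real.sqrt L / Real.sqrt 2 ≤ Real.sqrt p := by
          have h1 : L / 2 ≤ (p:ℝ) := by linarith
          have h2 : Real.sqrt (L/2) ≤ Real.sqrt p := Real.sqrt_le_sqrt h1
          rw [Real.sqrt_div hLpos.le] at h2
          rw [show ((2:ℝ)) = ((2:ℝ)) from rfl] at h2
          linarith [h2]
        have hlp : Real.log L / 2 ≤ Real.log p := by
          calc Real.log L / 2 ≤ Real.log y := hlogy
            _ ≤ Real.log p := Real.log_le_log hypos hpyR
        have hsqrt2 : Real.sqrt 2 * Real.sqrt 2 = 2 := Real.mul_self_sqrt (by norm_num)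
        have hs2pos : (0:ℝ) < Real.sqrt 2 := Real.sqrt_pos.mpr (by norm_num)
        have hsppos : (0:ℝ) < Real.sqrt p := Real.sqrt_pos.mpr hppos
        have hpos1 : (0:ℝ) < Real.sqrt L * Real.log L := by positivity
        have hkey : Real.sqrt L * Real.log L ≤ 2 * Real.sqrt 2 * Real.sqrt p * Real.log p := by
          have hb := mul_le_mul hsp hlp (by linarith) hsppos.le
          have hc : (Real.sqrt L / Real.sqrt 2) * (Real.log L / 2)
              = Real.sqrt L * Real.log L / (2 * Real.sqrt 2) := by
            field_simp
          rw [hc, div_le_iff₀ (by positivity)] at hb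
          nlinarith [hb]
        rw [rf, div_le_iff₀ hsppos, div_mul_eq_mul_div, div_mul_eq_mul_div, le_div_iff₀ hpos1]
        nlinarith [hkey]
      have hsum2 : ∑ p ∈ q.primeFactors.filter (fun p => ¬ p < y), rf p
          ≤ (2 * Real.sqrt 2 / (Real.sqrt L * Real.log L)) *
            ∑ p ∈ q.primeFactors.filter (fun p => ¬ p < y), Real.log p := by
        rw [Finset.mul_sum]
        exact Finset.sum_le_sum hterm
      have hsumlog : ∑ p ∈ q.primeFactors.filter (fun p => ¬ p < y), Real.log p ≤ L := by
        have h1 : ∑ p ∈ q.primeFactors.filter (fun p => ¬ p < y), Real.log p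
            ≤ ∑ p ∈ q.primeFactors, Real.log p := by
          apply Finset.sum_le_sum_of_subset_of_nonneg (Finset.filter_subset _ _)
          intro p hp _
          have := (Nat.prime_of_mem_primeFactors hp).one_lt
          exact Real.log_nonneg (by exact_mod_cast this.le)
        have h2 : ∑ p ∈ q.primeFactors, Real.log p = Real.log ((q.primeFactors.prod id : ℕ) : ℝ) := by
          rw [Nat.cast_prod, Real.log_prod]
          · simp
          · intro p hp
            have := (Nat.prime_of_mem_primeFactors hp).pos
            simp only [id_eq]
            positivity
        have h3 : (q.primeFactors.prod id : ℕ) ≤ q :=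
          Nat.le_of_dvd hq0 (by simpa [id] using Nat.prod_primeFactors_dvd q)
        have h4 : Real.log ((q.primeFactors.prod id : ℕ) : ℝ) ≤ L := by
          apply Real.log_le_log _ (by exact_mod_cast h3)
          have : 0 < q.primeFactors.prod id := Finset.prod_pos (fun p hp => (Nat.prime_of_mem_primeFactors hp).pos)
          exact_mod_cast this
        linarith
      have hs2lt : Real.sqrt 2 ≤ 1.42 := by
        nlinarith [Real.sq_sqrt (by norm_num : (0:ℝ) ≤ 2), Real.sqrt_nonneg 2]
      have hc0 : 0 ≤ 2 * Real.sqrt 2 / (Real.sqrt L * Real.log L) := by positivity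
      have h5 : (2 * Real.sqrt 2 / (Real.sqrt L * Real.log L)) *
            ∑ p ∈ q.primeFactors.filter (fun p => ¬ p < y), Real.log p
          ≤ (2 * Real.sqrt 2 / (Real.sqrt L * Real.log L)) * L :=
        mul_le_mul_of_nonneg_left hsumlog hc0
      have h6 : (2 * Real.sqrt 2 / (Real.sqrt L * Real.log L)) * L
          = 2 * Real.sqrt 2 * Real.sqrt L / Real.log L := by
        rw [div_mul_eq_mul_div]
        rw [div_eq_div_iff (by positivity) (by positivity)]
        linear_combination (-(2*Real.sqrt 2*Real.log L)) * hsqL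
      have h7 : 2 * Real.sqrt 2 * Real.sqrt L / Real.log L ≤ 3 * Real.sqrt L / Real.log L := by
        rw [div_le_div_iff₀ hlogLpos hlogLpos]
        nlinarith [mul_le_mul_of_nonneg_right (by linarith [hs2lt] : 2*Real.sqrt 2 ≤ 3)
          (mul_nonneg (Real.sqrt_nonneg L) hlogLpos.le)]
      linarith
    have hnn : 0 ≤ Real.sqrt L / Real.log L := by positivity
    have hee : 80 * Real.sqrt L / Real.log L + 3 * Real.sqrt L / Real.log L
        ≤ 100 * Real.sqrt L / Real.log L := by
      rw [← add_div, div_le_div_iff₀ hlogLpos hlogLpos]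
      nlinarith [Real.sqrt_nonneg L, hlogLpos]
    linarith
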